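/- Let ψ_θ and ψ_φ be strict Archimedean generators, ρ = ψ_φ^{-1}∘ψ_θ, and F̄_i, F̄_j, F̄_k survival functions. Define H_{0,i} = ψ_φ^{-1}∘F̄_i + ψ_φ^{-1}∘F̄_k and H_{0,j} = ψ_φ^{-1}∘F̄_j + ψ_φ^{-1}∘F̄_k (continuous strictly increasing bijections of [0,∞) onto itself), D_{ik} = ψ_φ^{-1}∘F̄_i∘H_{0,i}^{-1}, D_{jk} = ψ_φ^{-1}∘F̄_j∘H_{0,j}^{-1}, D_{ki} = ψ_φ^{-1}∘F̄_k∘H_{0,i}^{-1}, D_{kj} = ψ_φ^{-1}∘F̄_k∘H_{0,j}^{-1}. Let F̄_{τ_i,τ_j}(t_i,t_j) = ψ_φ( ρ( ρ^{-1}(ψ_φ^{-1}(F̄_i(t_i))) + ρ^{-1}(ψ_φ^{-1}(F̄_j(t_j))) ) + ψ_φ^{-1}(F̄_k(max(t_i,t_j))) ), F̄_{τ_i} = ψ_φ∘H_{0,i}, F̄_{τ_j} = ψ_φ∘H_{0,j}. Define Ĉ:(0,1]²→(0,1] by Ĉ(u,v) = ψ_φ( ρ( ρ^{-1}(D_{ik}(ψ_φ^{-1}(u)))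 + ρ^{-1}(D_{jk}(ψ_φ^{-1}(v))) ) + max( D_{ki}(ψ_φ^{-1}(u)), D_{kj}(ψ_φ^{-1}(v)) ) ). Then F̄_{τ_i,τ_j}(t_i,t_j) = Ĉ( F̄_{τ_i}(t_i), F̄_{τ_j}(t_j) ) for all t_i,t_j∈[0,∞); that is, Ĉ is the survival copula of (τ_i,τ_j). -/

import Mathlib

open Set MeasureTheory

/-- A survival function: continuous, strictly decreasing on `[0,∞)`, equal to `1` at `0`,
tending to `0` at `+∞`, with values in `(0,1]` on `[0,∞)`. -/
structure SurvFun where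
  toFun : ℝ → ℝ
  continuousOn : ContinuousOn toFun (Ici 0)
  strictAntiOn : StrictAntiOn toFun (Ici 0)
  map_zero : toFun 0 = 1
  tendsto_atTop : Filter.Tendsto toFun Filter.atTop (nhds 0)
  mapsTo : MapsTo toFun (Ici 0) (Ioc 0 1)

/-- A strict Archimedean generator: a continuous strictly decreasing bijection of `[0,∞)`
onto `(0,1]` with `ψ 0 = 1` and `ψ x → 0` as `x → ∞`, together with its inverse. -/
structure ArchGen extends SurvFun where
  bijOn : BijOn toFun (Ici 0) (Ioc 0 1)
  inv : ℝ → ℝ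
  inv_mapsTo : MapsTo inv (Ioc 0 1) (Ici 0)
  leftInv : ∀ x ∈ Ici (0:ℝ), inv (toFun x) = x
  rightInv : ∀ u ∈ Ioc (0:ℝ) 1, toFun (inv u) = u

/-- the survival copula of `(τ_i, τ_j) = (min(X_i,X_k), min(X_j,X_k))`
in the hierarchical contagion model with systemic shock `X_k`. -/
theorem hierarchical_survival_copula_systemic_outer
    (Gθ Gφ : ArchGen) (Fi Fj Fk : SurvFun)
    (ρ ρinv : ℝ → ℝ)
    (hρ : ∀ x, ρ x = Gφ.inv (Gθ.toFun x))
    (hρinv_left : ∀ x ∈ Ici (0:ℝ), ρinv (ρ x) = x)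
    (hρinv_right : ∀ y ∈ Ici (0:ℝ), ρ (ρinv y) = y)
    (H0iinv H0jinv : ℝ → ℝ)
    (hH0i_maps : MapsTo H0iinv (Ici 0) (Ici 0))
    (hH0j_maps : MapsTo H0jinv (Ici 0) (Ici 0))
    (hH0i_left : ∀ x ∈ Ici (0:ℝ),
      H0iinv (Gφ.inv (Fi.toFun x) + Gφ.inv (Fk.toFun x)) = x)
    (hH0i_right : ∀ y ∈ Ici (0:ℝ),
      Gφ.inv (Fi.toFun (H0iinv y)) + Gφ.inv (Fk.toFun (H0iinv y)) = y)
    (hH0j_left : ∀ x ∈ Ici (0:ℝ),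
      H0jinv (Gφ.inv (Fj.toFun x) + Gφ.inv (Fk.toFun x)) = x)
    (hH0j_right : ∀ y ∈ Ici (0:ℝ),
      Gφ.inv (Fj.toFun (H0jinv y)) + Gφ.inv (Fk.toFun (H0jinv y)) = y) :
    let Dik : ℝ → ℝ := fun x => Gφ.inv (Fi.toFun (H0iinv x))
    let Djk : ℝ → ℝ := fun x => Gφ.inv (Fj.toFun (H0jinv x))
    let Dki : ℝ → ℝ := fun x => Gφ.inv (Fk.toFun (H0iinv x))
    let Dkj : ℝ → ℝ := fun x => Gφ.inv (Fk.toFun (H0jinv x))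
    let Chat : ℝ → ℝ → ℝ := fun u v =>
      Gφ.toFun (ρ (ρinv (Dik (Gφ.inv u)) + ρinv (Djk (Gφ.inv v)))
        + max (Dki (Gφ.inv u)) (Dkj (Gφ.inv v)))
    ∀ ti tj : ℝ, 0 ≤ ti → 0 ≤ tj →
      Gφ.toFun (ρ (ρinv (Gφ.inv (Fi.toFun ti)) + ρinv (Gφ.inv (Fj.toFun tj)))
          + Gφ.inv (Fk.toFun (max ti tj)))
        = Chat (Gφ.toFun (Gφ.inv (Fi.toFun ti) + Gφ.inv (Fk.toFun ti)))
            (Gφ.toFun (Gφ.inv (Fj.toFun tj) + Gφ.inv (Fk.toFun tj))) := by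

  intro Dik Djk Dki Dkj Chat ti tj hti htj
  -- basic membership facts
  have hFi : Fi.toFun ti ∈ Ioc (0:ℝ) 1 := Fi.mapsTo hti
  have hFj : Fj.toFun tj ∈ Ioc (0:ℝ) 1 := Fj.mapsTo htj
  have hFki : Fk.toFun ti ∈ Ioc (0:ℝ) 1 := Fk.mapsTo hti
  have hFkj : Fk.toFun tj ∈ Ioc (0:ℝ) 1 := Fk.mapsTo htj
  have hai : Gφ.inv (Fi.toFun ti) ∈ Ici (0:ℝ) := Gφ.inv_mapsTo hFi
  have haj : Gφ.inv (Fj.toFun tj) ∈ Ici (0:ℝ) := Gφ.inv_mapsTo hFj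
  have hbi : Gφ.inv (Fk.toFun ti) ∈ Ici (0:ℝ) := Gφ.inv_mapsTo hFki
  have hbj : Gφ.inv (Fk.toFun tj) ∈ Ici (0:ℝ) := Gφ.inv_mapsTo hFkj
  have hsi : Gφ.inv (Fi.toFun ti) + Gφ.inv (Fk.toFun ti) ∈ Ici (0:ℝ) :=
    Set.mem_Ici.mpr (add_nonneg hai hbi)
  have hsj : Gφ.inv (Fj.toFun tj) + Gφ.inv (Fk.toFun tj) ∈ Ici (0:ℝ) :=
    Set.mem_Ici.mpr (add_nonneg haj hbj)
  -- Gφ.inv (Gφ.toFun (sum)) = sum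
  have hinvi : Gφ.inv (Gφ.toFun (Gφ.inv (Fi.toFun ti) + Gφ.inv (Fk.toFun ti)))
      = Gφ.inv (Fi.toFun ti) + Gφ.inv (Fk.toFun ti) := Gφ.leftInv _ hsi
  have hinvj : Gφ.inv (Gφ.toFun (Gφ.inv (Fj.toFun tj) + Gφ.inv (Fk.toFun tj)))
      = Gφ.inv (Fj.toFun tj) + Gφ.inv (Fk.toFun tj) := Gφ.leftInv _ hsj
  have hHi : H0iinv (Gφ.inv (Fi.toFun ti) + Gφ.inv (Fk.toFun ti)) = ti :=
    hH0i_left ti hti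
  have hHj : H0jinv (Gφ.inv (Fj.toFun tj) + Gφ.inv (Fk.toFun tj)) = tj :=
    hH0j_left tj htj
  -- monotonicity of Gφ.inv ∘ Fk on [0,∞): max commutes
  have hmono : ∀ s t : ℝ, 0 ≤ s → 0 ≤ t → s ≤ t →
      Gφ.inv (Fk.toFun s) ≤ Gφ.inv (Fk.toFun t) := by
    intro s t hs ht hst
    rcases eq_or_lt_of_le hst with h | h
    · simp [h]
    · have hFlt : Fk.toFun t < Fk.toFun s := Fk.strictAntiOn hs ht h
      by_contra hcon
      push_neg at hcon
      have h1 : Gφ.toFun (Gφ.inv (Fk.toFun s)) < Gφ.toFun (Gφ.inv (Fk.toFun t)) :=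
        Gφ.strictAntiOn (Gφ.inv_mapsTo (Fk.mapsTo ht)) (Gφ.inv_mapsTo (Fk.mapsTo hs)) hcon
      rw [Gφ.rightInv _ (Fk.mapsTo ht), Gφ.rightInv _ (Fk.mapsTo hs)] at h1
      exact absurd h1 (not_lt.mpr hFlt.le)
  have hmax : max (Gφ.inv (Fk.toFun ti)) (Gφ.inv (Fk.toFun tj))
      = Gφ.inv (Fk.toFun (max ti tj)) := by
    rcases le_total ti tj with h | h
    · rw [max_eq_right h, max_eq_right (hmono ti tj hti htj h)]
    · rw [max_eq_left h, max_eq_left (hmono tj ti htj hti h)]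
  simp only [Chat, Dik, Djk, Dki, Dkj, hinvi, hinvj, hHi, hHj, hmax]
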